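/- Fix m > 0 and for each T > 0 let N_T be a Poisson random variable with mean mT. Then for every x ≥ m, lim_{T→∞} (1/T) ln P(N_T ≥ xT) = −( x·ln(x/m) − x + m ). -/

import Mathlib

open MeasureTheory ProbabilityTheory Filter

lemma exp_tsum' (y : ℝ) : ∑' n : ℕ, y ^ n / (Nat.factorial n) = Real.exp y := by
  rw [Real.exp_eq_exp_ℝ, NormedSpace.exp_eq_tsum_div]

lemma log_factorial_le' {n : ℕ} (hn : 1 ≤ n) :
    Real.log (Nat.factorial n) ≤ 1 + Real.log n / 2 + n * Real.log n - n := by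
  obtain ⟨k, rfl⟩ := Nat.exists_eq_add_of_le hn
  have h1 : Real.log (Stirling.stirlingSeq (1 + k)) ≤ Real.log (Stirling.stirlingSeq 1) := by
    have := Stirling.log_stirlingSeq'_antitone (Nat.zero_le k)
    simpa [Function.comp, Nat.succ_eq_add_one, add_comm] using this
  have h2 := Stirling.log_stirlingSeq_formula (1 + k)
  set n := 1 + k with hn'
  have hnpos : (0 : ℝ) < n := by positivity
  have h3 : Real.log (Stirling.stirlingSeq 1) = 1 - Real.log 2 / 2 := by
    rw [Stirling.stirlingSeq_one, Real.log_div (by positivity) (by positivity),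
      Real.log_exp, Real.log_sqrt (by norm_num)]
  have h4 : Real.log ((n : ℝ) / Real.exp 1) = Real.log n - 1 := by
    rw [Real.log_div (by positivity) (by positivity), Real.log_exp]
  have h5 : Real.log (2 * (n : ℝ)) = Real.log 2 + Real.log n := by
    rw [Real.log_mul (by norm_num) (by positivity)]
  have := h2 ▸ h1
  rw [h3, h5, h4] at this
  nlinarith [this]

/-- `N` is a Poisson random variable with mean `m`. -/
noncomputable def IsPoissonRV {Ω : Type*} [MeasureSpace Ω] (m : ℝ) (N : Ω → ℕ) : Prop :=
  Measurable N ∧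
  ∀ k : ℕ, ℙ {ω | N ω = k} = ENNReal.ofReal (Real.exp (-m) * m ^ k / (Nat.factorial k))

lemma poisson_upper_bound' {Ω : Type*} [MeasureSpace Ω] [IsProbabilityMeasure (ℙ : Measure Ω)]
    (m : ℝ) (hm : 0 < m) (x : ℝ) (hx : m ≤ x) (T : ℝ) (hT : 0 < T)
    (N : Ω → ℕ) (hP : IsPoissonRV (m * T) N) :
    (ℙ {ω | x * T ≤ (N ω : ℝ)}).toReal ≤
      Real.exp (-(T * (x * Real.log (x / m) - x + m))) := by
  have hx0 : 0 < x := hm.trans_le hx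
  set θ := Real.log (x / m) with hθ
  have hθ0 : 0 ≤ θ := Real.log_nonneg ((one_le_div hm).mpr hx)
  have hexpθ : Real.exp θ = x / m := Real.exp_log (by positivity)
  set A := {ω | x * T ≤ (N ω : ℝ)} with hA
  set a : ℕ → ℝ := fun k =>
    Real.exp (-(θ * (x * T)) - m * T) * ((m * T * Real.exp θ) ^ k / (Nat.factorial k)) with ha
  have ha_eq : ∀ k : ℕ, a k =
      Real.exp (θ * ((k : ℝ) - x * T)) *
        (Real.exp (-(m * T)) * (m * T) ^ k / (Nat.factorial k)) := by
    intro k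
    have h1 : Real.exp (θ * ((k : ℝ) - x * T)) = Real.exp θ ^ k * Real.exp (-(θ * (x * T))) := by
      rw [← Real.exp_nat_mul, ← Real.exp_add]; ring_nf
    rw [ha, h1]
    simp only [mul_pow]
    rw [show -(θ * (x * T)) - m * T = -(θ * (x * T)) + -(m * T) by ring, Real.exp_add]
    ring
  have ha_nonneg : ∀ k, 0 ≤ a k := by
    intro k; rw [ha_eq k]; positivity
  have ha_summable : Summable a :=
    (Real.summable_pow_div_factorial (m * T * Real.exp θ)).mul_left _
  have hmeas : ℙ A ≤ ∑' k : ℕ, ENNReal.ofReal (a k) := by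
    have hsub : A ⊆ ⋃ k : ℕ, ({ω | N ω = k} ∩ A) := by
      intro ω hω
      exact Set.mem_iUnion.mpr ⟨N ω, ⟨rfl, hω⟩⟩
    refine le_trans (measure_mono hsub) (le_trans (measure_iUnion_le _) ?_)
    refine ENNReal.tsum_le_tsum fun k => ?_
    by_cases hk : x * T ≤ (k : ℝ)
    · calc ℙ ({ω | N ω = k} ∩ A) ≤ ℙ {ω | N ω = k} := measure_mono Set.inter_subset_left
        _ = ENNReal.ofReal (Real.exp (-(m * T)) * (m * T) ^ k / (Nat.factorial k)) := hP.2 k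
        _ ≤ ENNReal.ofReal (a k) := by
            refine ENNReal.ofReal_le_ofReal ?_
            rw [ha_eq k]
            nth_rewrite 1 [← one_mul (Real.exp (-(m * T)) * (m * T) ^ k / (Nat.factorial k))]
            have : (0:ℝ) ≤ Real.exp (-(m * T)) * (m * T) ^ k / (Nat.factorial k) := by positivity
            exact mul_le_mul_of_nonneg_right
              (Real.one_le_exp (mul_nonneg hθ0 (by linarith))) this
    · have : {ω | N ω = k} ∩ A = ∅ := by
        ext ω; simp only [Set.mem_inter_iff, Set.mem_setOf_eq, Set.mem_empty_iff_false,
          iff_false, not_and, hA]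
        intro h1 h2; rw [h1] at h2; exact hk h2
      rw [this, measure_empty]; exact zero_le
  have hsum : ∑' k : ℕ, ENNReal.ofReal (a k) =
      ENNReal.ofReal (Real.exp (-(T * (x * Real.log (x / m) - x + m)))) := by
    rw [← ENNReal.ofReal_tsum_of_nonneg ha_nonneg ha_summable]
    congr 1
    rw [ha]
    rw [tsum_mul_left, exp_tsum', ← Real.exp_add]
    congr 1
    rw [hexpθ]
    field_simp
    ring
  refine ENNReal.toReal_le_of_le_ofReal (Real.exp_nonneg _) ?_
  rw [← hsum]; exact hmeas

lemma poisson_lower_bound' {Ω : Type*} [MeasureSpace Ω] [IsProbabilityMeasure (ℙ : Measure Ω)]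
    (m : ℝ) (hm : 0 < m) (x : ℝ) (T : ℝ) (hT : 0 < T)
    (N : Ω → ℕ) (hP : IsPoissonRV (m * T) N) :
    0 < (ℙ {ω | x * T ≤ (N ω : ℝ)}).toReal ∧
      -(m * T) + (⌈x * T⌉₊ : ℝ) * Real.log (m * T) - Real.log (Nat.factorial ⌈x * T⌉₊) ≤
        Real.log (ℙ {ω | x * T ≤ (N ω : ℝ)}).toReal := by
  set k := ⌈x * T⌉₊ with hk
  set p : ℝ := Real.exp (-(m * T)) * (m * T) ^ k / (Nat.factorial k) with hp
  have hmT : 0 < m * T := by positivity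
  have hppos : 0 < p := by positivity
  have hsub : {ω | N ω = k} ⊆ {ω | x * T ≤ (N ω : ℝ)} := by
    intro ω hω
    simp only [Set.mem_setOf_eq] at *
    rw [hω]
    exact Nat.le_ceil _
  have hle : ENNReal.ofReal p ≤ ℙ {ω | x * T ≤ (N ω : ℝ)} := by
    rw [← hP.2 k]; exact measure_mono hsub
  have hle' : p ≤ (ℙ {ω | x * T ≤ (N ω : ℝ)}).toReal :=
    (ENNReal.ofReal_le_iff_le_toReal (measure_ne_top _ _)).mp hle
  have hpos : 0 < (ℙ {ω | x * T ≤ (N ω : ℝ)}).toReal := lt_of_lt_of_le hppos hle'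
  have hlogp : Real.log p = -(m * T) + (k : ℝ) * Real.log (m * T) -
      Real.log (Nat.factorial k) := by
    rw [hp, Real.log_div (by positivity) (by positivity),
      Real.log_mul (by positivity) (by positivity), Real.log_exp, Real.log_pow]
  exact ⟨hpos, hlogp ▸ Real.log_le_log hppos hle'⟩

lemma g_tendsto' (m x : ℝ) (hm : 0 < m) (hx : m ≤ x) :
    Tendsto (fun T : ℝ => (1 / T) * (-(m * T) + (⌈x * T⌉₊ : ℝ) * Real.log (m * T) -
        (1 + Real.log ⌈x * T⌉₊ / 2 + (⌈x * T⌉₊ : ℝ) * Real.log ⌈x * T⌉₊ - (⌈x * T⌉₊ : ℝ))))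
      atTop (nhds (-(x * Real.log (x / m) - x + m))) := by
  have hx0 : 0 < x := hm.trans_le hx
  set k : ℝ → ℝ := fun T => (⌈x * T⌉₊ : ℝ) with hkdef
  have hev : ∀ᶠ T : ℝ in atTop, max 1 x⁻¹ ≤ T := eventually_ge_atTop _
  have hbasic : ∀ T : ℝ, max 1 x⁻¹ ≤ T →
      0 < T ∧ 1 ≤ x * T ∧ 1 ≤ k T ∧ x * T ≤ k T ∧ k T ≤ x * T + 1 := by
    intro T hT
    have h1 : (1:ℝ) ≤ T := le_trans (le_max_left _ _) hT
    have hT0 : 0 < T := lt_of_lt_of_le one_pos h1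
    have hxT : 1 ≤ x * T := by
      have : x⁻¹ ≤ T := le_trans (le_max_right _ _) hT
      calc (1:ℝ) = x * x⁻¹ := by field_simp
        _ ≤ x * T := by nlinarith
    refine ⟨hT0, hxT, ?_, Nat.le_ceil _, ?_⟩
    · have h : (1:ℕ) ≤ ⌈x * T⌉₊ := Nat.one_le_ceil_iff.mpr (by linarith)
      simp only [hkdef]
      exact_mod_cast h
    · exact le_of_lt (Nat.ceil_lt_add_one (by linarith))
  have c1 : Tendsto (fun T => k T / T) atTop (nhds x) := by
    have hup : Tendsto (fun T : ℝ => x + T⁻¹) atTop (nhds x) := by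
      have h := (tendsto_const_nhds (x := x) (f := (atTop : Filter ℝ))).add tendsto_inv_atTop_zero
      simpa using h
    refine tendsto_of_tendsto_of_tendsto_of_le_of_le' (tendsto_const_nhds (x := x)) hup
      (hev.mono fun T hT => ?_) (hev.mono fun T hT => ?_)
    · obtain ⟨hT0, _, _, h4, _⟩ := hbasic T hT
      rw [le_div_iff₀ hT0]; linarith
    · obtain ⟨hT0, _, _, _, h5⟩ := hbasic T hT
      rw [div_le_iff₀ hT0]
      have : T⁻¹ * T = 1 := inv_mul_cancel₀ hT0.ne'
      nlinarith
  have c2 : Tendsto (fun T => Real.log (m * T) - Real.log (k T)) atTop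
      (nhds (Real.log (m / x))) := by
    have hq : Tendsto (fun T => m / (k T / T)) atTop (nhds (m / x)) :=
      tendsto_const_nhds.div c1 hx0.ne'
    have hlog : Tendsto (fun T => Real.log (m / (k T / T))) atTop (nhds (Real.log (m / x))) :=
      ((Real.continuousAt_log (by positivity)).tendsto.comp hq)
    refine hlog.congr' (hev.mono fun T hT => ?_)
    obtain ⟨hT0, _, h3, _, _⟩ := hbasic T hT
    have hk0 : (0:ℝ) < k T := lt_of_lt_of_le one_pos h3
    rw [div_div_eq_mul_div, Real.log_div (by positivity) hk0.ne']
  have c3 : Tendsto (fun T => Real.log (k T) / T) atTop (nhds 0) := by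
    have hlogT : Tendsto (fun T : ℝ => Real.log T / T) atTop (nhds 0) := by
      have h := Real.tendsto_pow_log_div_mul_add_atTop 1 0 1 one_ne_zero
      simpa using h
    have hconst : Tendsto (fun T : ℝ => Real.log (x + 1) / T) atTop (nhds 0) :=
      tendsto_const_nhds.div_atTop tendsto_id
    have hup : Tendsto (fun T : ℝ => (Real.log (x + 1) + Real.log T) / T) atTop (nhds 0) := by
      have h := hconst.add hlogT
      simpa [add_div] using h
    refine tendsto_of_tendsto_of_tendsto_of_le_of_le' tendsto_const_nhds hup
      (hev.mono fun T hT => ?_) (hev.mono fun T hT => ?_)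
    · obtain ⟨hT0, _, h3, _, _⟩ := hbasic T hT
      exact div_nonneg (Real.log_nonneg h3) hT0.le
    · obtain ⟨hT0, _, h3, _, h5⟩ := hbasic T hT
      have h1T : (1:ℝ) ≤ T := le_trans (le_max_left _ _) hT
      have hk0 : (0:ℝ) < k T := lt_of_lt_of_le one_pos h3
      have hle : Real.log (k T) ≤ Real.log (x + 1) + Real.log T := by
        rw [← Real.log_mul (by positivity) (by positivity)]
        refine Real.log_le_log hk0 ?_
        nlinarith
      gcongr
  have hcomb : Tendsto (fun T => -m + (k T / T) * ((Real.log (m * T) - Real.log (k T)) + 1)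
      - T⁻¹ - (Real.log (k T) / T) / 2) atTop
      (nhds (-m + x * (Real.log (m / x) + 1) - 0 - 0 / 2)) :=
    ((tendsto_const_nhds.add (c1.mul (c2.add tendsto_const_nhds))).sub
      tendsto_inv_atTop_zero).sub (c3.div_const 2)
  have hval : -m + x * (Real.log (m / x) + 1) - 0 - 0 / 2
      = -(x * Real.log (x / m) - x + m) := by
    rw [Real.log_div hm.ne' hx0.ne', Real.log_div hx0.ne' hm.ne']; ring
  rw [hval] at hcomb
  refine hcomb.congr' (hev.mono fun T hT => ?_)
  obtain ⟨hT0, _, h3, _, _⟩ := hbasic T hT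
  field_simp
  simp only [hkdef, mul_comm T x]
  ring

theorem poisson_upper_tail_log_asymptotics
    {Ω : Type*} [MeasureSpace Ω] [IsProbabilityMeasure (ℙ : Measure Ω)]
    (m : ℝ) (hm : 0 < m)
    (N : ℝ → Ω → ℕ) (hN : ∀ T > (0 : ℝ), IsPoissonRV (m * T) (N T))
    (x : ℝ) (hx : m ≤ x) :
    Filter.Tendsto
      (fun T : ℝ => (1 / T) * Real.log (ℙ {ω | x * T ≤ (N T ω : ℝ)}).toReal)
      Filter.atTop (nhds (-(x * Real.log (x / m) - x + m))) := by
  have hx0 : 0 < x := hm.trans_le hx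
  have hev : ∀ᶠ T : ℝ in atTop, max 1 x⁻¹ ≤ T := eventually_ge_atTop _
  refine tendsto_of_tendsto_of_tendsto_of_le_of_le' (g_tendsto' m x hm hx)
    (tendsto_const_nhds) (hev.mono fun T hT => ?_) (hev.mono fun T hT => ?_)
  · -- lower bound: g T ≤ f T
    have h1 : (1:ℝ) ≤ T := le_trans (le_max_left _ _) hT
    have hT0 : 0 < T := lt_of_lt_of_le one_pos h1
    have hxT : 1 ≤ x * T := by
      have : x⁻¹ ≤ T := le_trans (le_max_right _ _) hT
      calc (1:ℝ) = x * x⁻¹ := by field_simp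
        _ ≤ x * T := by nlinarith
    have hk1 : 1 ≤ ⌈x * T⌉₊ := Nat.one_le_ceil_iff.mpr (by linarith)
    obtain ⟨hpos, hlb⟩ := poisson_lower_bound' m hm x T hT0 (N T) (hN T hT0)
    have hfac := log_factorial_le' hk1
    refine mul_le_mul_of_nonneg_left ?_ (by positivity)
    linarith
  · -- upper bound: f T ≤ -I
    have h1 : (1:ℝ) ≤ T := le_trans (le_max_left _ _) hT
    have hT0 : 0 < T := lt_of_lt_of_le one_pos h1
    obtain ⟨hpos, _⟩ := poisson_lower_bound' m hm x T hT0 (N T) (hN T hT0)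
    have hub := poisson_upper_bound' m hm x hx T hT0 (N T) (hN T hT0)
    have hlog : Real.log (ℙ {ω | x * T ≤ (N T ω : ℝ)}).toReal ≤
        -(T * (x * Real.log (x / m) - x + m)) := by
      have := Real.log_le_log hpos hub
      rwa [Real.log_exp] at this
    calc (1 / T) * Real.log (ℙ {ω | x * T ≤ (N T ω : ℝ)}).toReal
        ≤ (1 / T) * (-(T * (x * Real.log (x / m) - x + m))) :=
          mul_le_mul_of_nonneg_left hlog (by positivity)
      _ = -(x * Real.log (x / m) - x + m) := by field_simp
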